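/- Let K ⊂ ℂ be a compact set. Then for every z ∈ ℂ, ∫_K 1/|z - ζ| dA(ζ) ≤ √(4π · Area(K)), where dA denotes two-dimensional Lebesgue measure on ℂ. -/

import Mathlib

open MeasureTheory Metric Set

/-- Integrability of `‖w‖⁻¹` on closed balls in `ℂ`. -/
lemma mergelyan_integrableOn_inv_norm {R : ℝ} (hR : 0 < R) :
    IntegrableOn (fun w : ℂ => ‖w‖⁻¹) (closedBall 0 R) volume := by
  have hnn : (0 : ℂ → ℝ) ≤ᵐ[volume.restrict (closedBall (0:ℂ) R)]
      fun w : ℂ => ‖w‖⁻¹ :=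
    Filter.Eventually.of_forall fun w => inv_nonneg.2 (norm_nonneg w)
  have hmble : Measurable fun w : ℂ => ‖w‖⁻¹ := measurable_norm.inv
  refine ⟨hmble.aestronglyMeasurable, ?_⟩
  rw [hasFiniteIntegral_iff_ofReal hnn,
    lintegral_eq_lintegral_meas_le _ hnn hmble.aemeasurable]
  have hRinv : (0:ℝ) < R⁻¹ := inv_pos.2 hR
  have hsub : Ioi (0:ℝ) ⊆ Ioc 0 R⁻¹ ∪ Ioi R⁻¹ := by
    rw [Ioc_union_Ioi_eq_Ioi hRinv.le]
  calc
    ∫⁻ t in Ioi (0:ℝ), (volume.restrict (closedBall (0:ℂ) R)) {a | t ≤ ‖a‖⁻¹}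
        ≤ ∫⁻ t in Ioc 0 R⁻¹ ∪ Ioi R⁻¹, (volume.restrict (closedBall (0:ℂ) R)) {a | t ≤ ‖a‖⁻¹} :=
      lintegral_mono_set hsub
    _ ≤ (∫⁻ t in Ioc 0 R⁻¹, (volume.restrict (closedBall (0:ℂ) R)) {a | t ≤ ‖a‖⁻¹}) +
        ∫⁻ t in Ioi R⁻¹, (volume.restrict (closedBall (0:ℂ) R)) {a | t ≤ ‖a‖⁻¹} :=
      lintegral_union_le _ _ _
    _ < ⊤ := by
      refine ENNReal.add_lt_top.2 ⟨?_, ?_⟩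
      · calc
          ∫⁻ t in Ioc (0:ℝ) R⁻¹, (volume.restrict (closedBall (0:ℂ) R)) {a | t ≤ ‖a‖⁻¹}
              ≤ ∫⁻ _ in Ioc (0:ℝ) R⁻¹, volume (closedBall (0:ℂ) R) := by
            refine lintegral_mono fun t => ?_
            exact (measure_mono (subset_univ _)).trans_eq (Measure.restrict_apply_univ _)
          _ = volume (closedBall (0:ℂ) R) * volume (Ioc (0:ℝ) R⁻¹) := setLIntegral_const _ _
          _ < ⊤ := ENNReal.mul_lt_top measure_closedBall_lt_top
              (by rw [Real.volume_Ioc]; exact ENNReal.ofReal_lt_top)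
      · have key : ∀ t ∈ Ioi R⁻¹, (volume.restrict (closedBall (0:ℂ) R)) {a | t ≤ ‖a‖⁻¹}
            ≤ ENNReal.ofReal (t ^ (-2:ℝ)) * NNReal.pi := by
          intro t ht
          have ht0 : (0:ℝ) < t := hRinv.trans ht
          have hsub2 : {a : ℂ | t ≤ ‖a‖⁻¹} ⊆ closedBall 0 t⁻¹ := by
            intro a ha
            rw [mem_closedBall_zero_iff]
            rcases eq_or_ne a 0 with h | h
            · simp [h, ht0.le]
            · have hna : (0:ℝ) < ‖a‖ := norm_pos_iff.2 h
              have := (le_inv_comm₀ ht0 hna).1 ha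
              exact this
          calc
            (volume.restrict (closedBall (0:ℂ) R)) {a | t ≤ ‖a‖⁻¹}
                ≤ volume {a : ℂ | t ≤ ‖a‖⁻¹} := Measure.restrict_le_self _
            _ ≤ volume (closedBall (0:ℂ) t⁻¹) := measure_mono hsub2
            _ = ENNReal.ofReal t⁻¹ ^ 2 * NNReal.pi := Complex.volume_closedBall _ _
            _ = ENNReal.ofReal (t ^ (-2:ℝ)) * NNReal.pi := by
              rw [← ENNReal.ofReal_pow (inv_nonneg.2 ht0.le),
                Real.rpow_neg ht0.le, Real.rpow_two, ← inv_pow]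
        calc
          ∫⁻ t in Ioi R⁻¹, (volume.restrict (closedBall (0:ℂ) R)) {a | t ≤ ‖a‖⁻¹}
              ≤ ∫⁻ t in Ioi R⁻¹, ENNReal.ofReal (t ^ (-2:ℝ)) * NNReal.pi :=
            setLIntegral_mono' measurableSet_Ioi key
          _ = (∫⁻ t in Ioi R⁻¹, ENNReal.ofReal (t ^ (-2:ℝ))) * NNReal.pi :=
            lintegral_mul_const' _ _ ENNReal.coe_ne_top
          _ < ⊤ := ENNReal.mul_lt_top
              (integrableOn_Ioi_rpow_of_lt (by norm_num) hRinv).setLIntegral_lt_top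
              ENNReal.coe_lt_top

/-- The exact value of the disc integral of `‖w‖⁻¹`. -/
lemma mergelyan_disc_integral {R : ℝ} (hR : 0 ≤ R) :
    ∫ w in closedBall (0:ℂ) R, ‖w‖⁻¹ = 2 * Real.pi * R := by
  rw [← integral_indicator measurableSet_closedBall]
  have h1 : (closedBall (0:ℂ) R).indicator (fun w => ‖w‖⁻¹)
      = fun w => (Set.Iic R).indicator (fun t : ℝ => t⁻¹) ‖w‖ := by
    ext w
    by_cases hw : w ∈ closedBall (0:ℂ) R
    · rw [indicator_of_mem hw, indicator_of_mem (by rwa [mem_Iic, ← mem_closedBall_zero_iff])]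
    · rw [indicator_of_notMem hw,
        indicator_of_notMem (by rwa [mem_Iic, ← mem_closedBall_zero_iff])]
  rw [h1, integral_fun_norm_addHaar (volume : Measure ℂ)
    (fun t : ℝ => (Set.Iic R).indicator (fun t : ℝ => t⁻¹) t)]
  have hdim : Module.finrank ℝ ℂ = 2 := Complex.finrank_real_complex
  rw [hdim]
  have h2 : ∫ y in Ioi (0:ℝ), y ^ (2 - 1) • (Set.Iic R).indicator (fun t : ℝ => t⁻¹) y = R := by
    have h3 : ∀ y : ℝ, y ^ (2 - 1) • (Set.Iic R).indicator (fun t : ℝ => t⁻¹) y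
        = (Set.Iic R).indicator (fun t : ℝ => t ^ 1 * t⁻¹) y := fun y => by
      by_cases hy : y ∈ Set.Iic R <;> simp [hy]
    simp_rw [h3]
    rw [setIntegral_indicator measurableSet_Iic, Ioi_inter_Iic,
      setIntegral_congr_fun measurableSet_Ioc
        (fun y hy => by rw [pow_one, mul_inv_cancel₀ (ne_of_gt hy.1)] : ∀ y ∈ Ioc (0:ℝ) R,
          y ^ 1 * y⁻¹ = (1:ℝ)),
      setIntegral_const, measureReal_def, Real.volume_Ioc, sub_zero, ENNReal.toReal_ofReal hR, smul_eq_mul, mul_one]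
  rw [h2, measureReal_def, Complex.volume_ball]
  simp only [one_pow, ENNReal.ofReal_one, one_mul, ENNReal.coe_toReal, NNReal.coe_real_pi]
  rw [nsmul_eq_mul, smul_eq_mul]
  ring

/-- Translation invariance. -/
lemma mergelyan_preimage (z : ℂ) (R : ℝ) :
    (fun t : ℂ => z - t) ⁻¹' closedBall 0 R = closedBall z R := by
  ext ζ
  simp [mem_closedBall, mem_closedBall_zero_iff, dist_eq_norm, norm_sub_rev z ζ]

lemma mergelyan_trans (z : ℂ) (R : ℝ) :
    ∫ ζ in closedBall z R, ‖z - ζ‖⁻¹ = ∫ w in closedBall (0:ℂ) R, ‖w‖⁻¹ := by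
  have hmp : MeasurePreserving (fun t : ℂ => z - t) volume volume :=
    MeasureTheory.Measure.measurePreserving_sub_left volume z
  have hemb : MeasurableEmbedding (fun t : ℂ => z - t) :=
    (MeasurableEquiv.subLeft z).measurableEmbedding
  rw [← mergelyan_preimage z R]
  exact hmp.setIntegral_preimage_emb hemb (fun w => ‖w‖⁻¹) _

lemma mergelyan_integrableOn' (z : ℂ) {R : ℝ} (hR : 0 < R) :
    IntegrableOn (fun ζ : ℂ => ‖z - ζ‖⁻¹) (closedBall z R) volume := by
  have hmp : MeasurePreserving (fun t : ℂ => z - t) volume volume :=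
    MeasureTheory.Measure.measurePreserving_sub_left volume z
  have hemb : MeasurableEmbedding (fun t : ℂ => z - t) :=
    (MeasurableEquiv.subLeft z).measurableEmbedding
  rw [← mergelyan_preimage z R]
  have := (hmp.integrableOn_comp_preimage hemb (f := fun w : ℂ => ‖w‖⁻¹)
    (s := closedBall 0 R)).2 (mergelyan_integrableOn_inv_norm hR)
  simpa [Function.comp_def] using this

/-- Mergelyan's estimate: `∫_K 1/|z - ζ| dA(ζ) ≤ √(4π · Area K)`. -/
theorem mergelyan_estimate (K : Set ℂ) (hK : IsCompact K) (z : ℂ) :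
    ∫ ζ in K, 1 / ‖z - ζ‖ ≤
      Real.sqrt (4 * Real.pi * (volume K).toReal) := by
  simp only [one_div]
  have hKfin : volume K ≠ ⊤ := hK.measure_lt_top.ne
  by_cases h0 : volume K = 0
  · rw [Measure.restrict_eq_zero.2 h0, integral_zero_measure]
    exact Real.sqrt_nonneg _
  set A := (volume K).toReal with hA
  have hA0 : 0 < A := ENNReal.toReal_pos h0 hKfin
  set r := Real.sqrt (A / Real.pi) with hr
  have hrpos : 0 < r := Real.sqrt_pos.2 (div_pos hA0 Real.pi_pos)
  set D := closedBall z r with hD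
  have hDmeas : MeasurableSet D := measurableSet_closedBall
  have hKmeas : MeasurableSet K := hK.isClosed.measurableSet
  have hvol : volume D = volume K := by
    rw [hD, Complex.volume_closedBall]
    calc
      ENNReal.ofReal r ^ 2 * NNReal.pi
          = ENNReal.ofReal (r ^ 2) * ENNReal.ofReal Real.pi := by
        rw [ENNReal.ofReal_pow (Real.sqrt_nonneg _)]
        congr 1
        rw [← NNReal.coe_real_pi, ENNReal.ofReal_coe_nnreal]
      _ = ENNReal.ofReal (r ^ 2 * Real.pi) := (ENNReal.ofReal_mul (by positivity)).symm
      _ = ENNReal.ofReal A := by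
        rw [hr, Real.sq_sqrt (div_nonneg hA0.le Real.pi_pos.le),
          div_mul_cancel₀ _ (ne_of_gt Real.pi_pos)]
      _ = volume K := ENNReal.ofReal_toReal hKfin
  obtain ⟨R, hRK⟩ := hK.isBounded.subset_closedBall z
  set R' := max R r with hR'
  have hR'pos : 0 < R' := lt_of_lt_of_le hrpos (le_max_right _ _)
  have hint : IntegrableOn (fun ζ : ℂ => ‖z - ζ‖⁻¹) (closedBall z R') volume :=
    mergelyan_integrableOn' z hR'pos
  have hintK : IntegrableOn (fun ζ : ℂ => ‖z - ζ‖⁻¹) K volume :=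
    hint.mono_set (hRK.trans (closedBall_subset_closedBall (le_max_left _ _)))
  have hintD : IntegrableOn (fun ζ : ℂ => ‖z - ζ‖⁻¹) D volume :=
    hint.mono_set (closedBall_subset_closedBall (le_max_right _ _))
  have hKD : volume (K \ D) = volume (D \ K) := by
    have h1 : volume (K ∩ D) + volume (K \ D) = volume K := measure_inter_add_diff K hDmeas
    have h2 : volume (D ∩ K) + volume (D \ K) = volume D := measure_inter_add_diff D hKmeas
    rw [inter_comm] at h2
    have hfin : volume (K ∩ D) ≠ ⊤ :=
      ((measure_mono inter_subset_left).trans_lt hK.measure_lt_top).ne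
    have : volume (K ∩ D) + volume (K \ D) = volume (K ∩ D) + volume (D \ K) := by
      rw [h1, h2, hvol]
    exact (ENNReal.add_right_inj hfin).1 this
  have hfinKD : volume (K \ D) < ⊤ := (measure_mono diff_subset).trans_lt hK.measure_lt_top
  have hfinDK : volume (D \ K) < ⊤ :=
    (measure_mono diff_subset).trans_lt measure_closedBall_lt_top
  -- pointwise bounds
  have hub : ∀ ζ ∈ K \ D, ‖(fun ζ : ℂ => ‖z - ζ‖⁻¹) ζ‖ ≤ r⁻¹ := by
    intro ζ hζ
    have h1 : r < dist ζ z := by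
      by_contra h
      exact hζ.2 (mem_closedBall.2 (not_lt.1 h))
    have h2 : r < ‖z - ζ‖ := by rwa [dist_eq_norm, norm_sub_rev] at h1
    rw [Real.norm_of_nonneg (inv_nonneg.2 (norm_nonneg _))]
    exact inv_anti₀ hrpos h2.le
  have hlb : ∀ᵐ ζ ∂(volume.restrict (D \ K)),
      r⁻¹ ≤ ‖z - ζ‖⁻¹ := by
    have hz : ∀ᵐ ζ : ℂ ∂volume, ζ ≠ z := by
      have : volume ({z} : Set ℂ) = 0 := measure_singleton z
      filter_upwards [measure_eq_zero_iff_ae_notMem.1 this] with ζ hζ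
      simpa using hζ
    filter_upwards [ae_restrict_mem (hDmeas.diff hKmeas), ae_restrict_of_ae hz] with ζ hζ hne
    have h1 : dist ζ z ≤ r := mem_closedBall.1 hζ.1
    have h2 : ‖z - ζ‖ ≤ r := by rwa [dist_eq_norm, norm_sub_rev] at h1
    have h3 : 0 < ‖z - ζ‖ := norm_pos_iff.2 (sub_ne_zero.2 (Ne.symm hne))
    exact inv_anti₀ h3 h2
  -- splitting the integrals
  have hdisjK : Disjoint (K ∩ D) (K \ D) :=
    disjoint_sdiff_self_right.mono_left inter_subset_right
  have hdisjD : Disjoint (D ∩ K) (D \ K) :=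
    disjoint_sdiff_self_right.mono_left inter_subset_right
  have hsplitK : ∫ ζ in K, ‖z - ζ‖⁻¹
      = (∫ ζ in K ∩ D, ‖z - ζ‖⁻¹) + ∫ ζ in K \ D, ‖z - ζ‖⁻¹ := by
    rw [← setIntegral_union hdisjK (hKmeas.diff hDmeas)
      (hintK.mono_set inter_subset_left) (hintK.mono_set diff_subset),
      Set.inter_union_diff]
  have hsplitD : ∫ ζ in D, ‖z - ζ‖⁻¹
      = (∫ ζ in D ∩ K, ‖z - ζ‖⁻¹) + ∫ ζ in D \ K, ‖z - ζ‖⁻¹ := by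
    rw [← setIntegral_union hdisjD (hDmeas.diff hKmeas)
      (hintD.mono_set inter_subset_left) (hintD.mono_set diff_subset),
      Set.inter_union_diff]
  have h1 : ∫ ζ in K \ D, ‖z - ζ‖⁻¹ ≤ r⁻¹ * (volume (K \ D)).toReal := by
    have := norm_setIntegral_le_of_norm_le_const (μ := volume) (s := K \ D)
      (f := fun ζ : ℂ => ‖z - ζ‖⁻¹) hfinKD hub
    exact (le_abs_self _).trans this
  have h2 : r⁻¹ * (volume (D \ K)).toReal ≤ ∫ ζ in D \ K, ‖z - ζ‖⁻¹ := by
    calc r⁻¹ * (volume (D \ K)).toReal = ∫ _ in D \ K, r⁻¹ := by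
          rw [setIntegral_const, measureReal_def, smul_eq_mul, mul_comm]
      _ ≤ ∫ ζ in D \ K, ‖z - ζ‖⁻¹ :=
          setIntegral_mono_ae_restrict
            (integrableOn_const hfinDK.ne) (hintD.mono_set diff_subset) hlb
  have hdisc : ∫ ζ in D, ‖z - ζ‖⁻¹ = 2 * Real.pi * r := by
    rw [hD, mergelyan_trans, mergelyan_disc_integral hrpos.le]
  have hmain : ∫ ζ in K, ‖z - ζ‖⁻¹ ≤ 2 * Real.pi * r := by
    calc ∫ ζ in K, ‖z - ζ‖⁻¹
        = (∫ ζ in K ∩ D, ‖z - ζ‖⁻¹) + ∫ ζ in K \ D, ‖z - ζ‖⁻¹ := hsplitK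
      _ ≤ (∫ ζ in K ∩ D, ‖z - ζ‖⁻¹) + r⁻¹ * (volume (K \ D)).toReal := by linarith
      _ = (∫ ζ in D ∩ K, ‖z - ζ‖⁻¹) + r⁻¹ * (volume (D \ K)).toReal := by
          rw [inter_comm, hKD]
      _ ≤ (∫ ζ in D ∩ K, ‖z - ζ‖⁻¹) + ∫ ζ in D \ K, ‖z - ζ‖⁻¹ := by linarith
      _ = ∫ ζ in D, ‖z - ζ‖⁻¹ := hsplitD.symm
      _ = 2 * Real.pi * r := hdisc
  have hfinal : 2 * Real.pi * r = Real.sqrt (4 * Real.pi * A) := by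
    have h4 : 4 * Real.pi * A = (2 * Real.pi) ^ 2 * (A / Real.pi) := by
      field_simp
      ring
    rw [h4, Real.sqrt_mul (by positivity), Real.sqrt_sq (by positivity), hr]
  rw [← hfinal]
  exact hmain
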